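/- Let d ≥ 1 and let M be a d×d real symmetric positive semidefinite matrix. Then det M = inf over all orthonormal bases (v_1,…,v_d) of ℝ^d of the product ∏_{j=1}^d v_j^T M v_j, and the infimum is attained (namely at an orthonormal eigenbasis of M). -/

import Mathlib

open Matrix

lemma trace_eq_sum_eigs {d : ℕ} (A : Matrix (Fin d) (Fin d) ℝ) (hA : A.IsHermitian) :
    A.trace = ∑ i, hA.eigenvalues i := by
  simpa using hA.trace_eq_sum_eigenvalues

lemma hadamard_psd {d : ℕ} (hd : 1 ≤ d) (A : Matrix (Fin d) (Fin d) ℝ) (hA : A.PosSemidef) :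
    A.det ≤ ∏ i, A i i := by
  have hdiag : ∀ i, 0 ≤ A i i := by
    intro i
    have := hA.dotProduct_mulVec_nonneg (Pi.single i 1)
    simpa [dotProduct, mulVec, Pi.single_apply, Finset.mul_sum] using this
  by_cases hz : ∃ i, A i i = 0
  · obtain ⟨i, hi⟩ := hz
    have h0 : A *ᵥ Pi.single i 1 = 0 := by
      rw [← hA.dotProduct_mulVec_zero_iff]
      simpa [star_trivial, dotProduct, mulVec, Pi.single_apply, Finset.mul_sum] using hi
    have hdet : A.det = 0 := by
      rw [← Matrix.exists_mulVec_eq_zero_iff]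
      exact ⟨Pi.single i 1, by simp [Pi.single_eq_same, funext_iff]; exact ⟨i, by simp⟩, h0⟩
    rw [hdet]
    exact Finset.prod_nonneg fun j _ => hdiag j
  · push_neg at hz
    have hpos : ∀ i, 0 < A i i := fun i => (hdiag i).lt_of_ne' (hz i)
    set c : Fin d → ℝ := fun i => Real.sqrt (A i i)⁻¹ with hc
    have hcpos : ∀ i, 0 < c i := fun i => Real.sqrt_pos.mpr (inv_pos.mpr (hpos i))
    set B := diagonal c * A * diagonal c with hB
    have hBpsd : B.PosSemidef := by
      have : B = (diagonal c)ᴴ * A * diagonal c := by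
        rw [conjTranspose_eq_transpose_of_trivial, diagonal_transpose]
      rw [this]
      exact hA.conjTranspose_mul_mul_same _
    have hBdiag : ∀ i, B i i = 1 := by
      intro i
      rw [hB, Matrix.mul_diagonal, Matrix.diagonal_mul]
      have : c i * c i = (A i i)⁻¹ := Real.mul_self_sqrt (inv_nonneg.mpr (hdiag i)) -- fix?
      calc c i * A i i * c i = (c i * c i) * A i i := by ring
        _ = 1 := by rw [this]; exact inv_mul_cancel₀ (hz i)
    set μ : Fin d → ℝ := hBpsd.1.eigenvalues with hμ
    have heig0 : ∀ i, 0 ≤ μ i := hBpsd.eigenvalues_nonneg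
    have htr : B.trace = (d : ℝ) := by
      simp [Matrix.trace, Matrix.diag, hBdiag]
    have hsum : ∑ i, μ i = (d : ℝ) := by rw [← trace_eq_sum_eigs B hBpsd.1, htr]
    have hdne : (d : ℝ) ≠ 0 := Nat.cast_ne_zero.mpr (by omega)
    have key := Real.geom_mean_le_arith_mean_weighted Finset.univ (fun _ => (d:ℝ)⁻¹) μ
      (fun i _ => by positivity) (by simp; field_simp) (fun i _ => heig0 i)
    have hsum' : ∑ i, (d:ℝ)⁻¹ * μ i = 1 := by
      rw [← Finset.mul_sum, hsum, inv_mul_cancel₀ hdne]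
    rw [hsum'] at key
    rw [Real.finset_prod_rpow Finset.univ μ (fun i _ => heig0 i)] at key
    have hPnn : 0 ≤ ∏ i, μ i := Finset.prod_nonneg fun i _ => heig0 i
    have hprodle : ∏ i, μ i ≤ 1 := by
      have h2 : ((∏ i, μ i) ^ ((d:ℝ)⁻¹) : ℝ) ^ (d:ℝ) ≤ 1 :=
        Real.rpow_le_one (Real.rpow_nonneg hPnn _) key (by positivity)
      rwa [← Real.rpow_mul hPnn, inv_mul_cancel₀ hdne, Real.rpow_one] at h2
    have hdetB : B.det ≤ 1 := by
      rw [hBpsd.1.det_eq_prod_eigenvalues]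
      simpa using hprodle
    set P : ℝ := ∏ i, c i with hP
    have hPpos : 0 < P := Finset.prod_pos fun i _ => hcpos i
    have hdetB' : B.det = P * A.det * P := by
      rw [hB, det_mul, det_mul, det_diagonal, hP]
    have hprodA : P * P * ∏ i, A i i = 1 := by
      rw [hP, ← Finset.prod_mul_distrib, ← Finset.prod_mul_distrib]
      apply Finset.prod_eq_one
      intro i _
      have : c i * c i = (A i i)⁻¹ := Real.mul_self_sqrt (inv_nonneg.mpr (hdiag i))
      rw [this]; exact inv_mul_cancel₀ (hz i)
    rw [hdetB'] at hdetB
    nlinarith [mul_pos hPpos hPpos]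

/-- **Determinant formula over orthonormal bases.**
Let `d ≥ 1` and let `M` be a `d×d` real symmetric positive semidefinite matrix. Then
`det M` is the minimum (infimum, and it is attained) over all orthonormal bases
`(v_1,…,v_d)` of `ℝ^d` of `∏_j v_jᵀ M v_j`. -/
theorem det_eq_min_prod_quadratic_forms
    (d : ℕ) (hd : 1 ≤ d) (M : Matrix (Fin d) (Fin d) ℝ)
    (hM : M.PosSemidef) :
    IsLeast {t : ℝ | ∃ v : Fin d → (Fin d → ℝ),
        (∀ i j, v i ⬝ᵥ v j = if i = j then 1 else 0) ∧
        t = ∏ j, v j ⬝ᵥ M.mulVec (v j)} M.det := by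
  constructor
  · -- membership via eigenbasis
    set b := hM.1.eigenvectorBasis with hb
    have hon : ∀ i j, (⇑(b i) : Fin d → ℝ) ⬝ᵥ ⇑(b j) = if i = j then 1 else 0 := by
      intro i j
      have h := (orthonormal_iff_ite.mp b.orthonormal) i j
      simpa [PiLp.inner_apply, RCLike.inner_apply, dotProduct, mul_comm] using h
    refine ⟨fun j => ⇑(b j), hon, ?_⟩
    rw [hM.1.det_eq_prod_eigenvalues]
    apply Finset.prod_congr rfl
    intro j _
    rw [hM.1.mulVec_eigenvectorBasis, dotProduct_smul]
    have := hon j j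
    simp only [if_pos rfl] at this
    simp [← hb, this]
  · rintro t ⟨v, hv, rfl⟩
    set V : Matrix (Fin d) (Fin d) ℝ := Matrix.of v with hV
    have hVVt : V * Vᵀ = 1 := by
      ext i j
      simpa [hV, mul_apply, dotProduct, one_apply] using hv i j
    have hBpsd : (V * M * Vᵀ).PosSemidef := by
      have h : V * M * Vᵀ = (Vᵀ)ᴴ * M * Vᵀ := by
        rw [conjTranspose_eq_transpose_of_trivial, transpose_transpose]
      rw [h]
      exact hM.conjTranspose_mul_mul_same _
    have hdet : (V * M * Vᵀ).det = M.det := by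
      have h1 : V.det * V.det = 1 := by
        have := congrArg Matrix.det hVVt
        rwa [det_mul, det_transpose, det_one] at this
      rw [det_mul, det_mul, det_transpose]
      calc V.det * M.det * V.det = V.det * V.det * M.det := by ring
        _ = M.det := by rw [h1, one_mul]
    have hdiag : ∀ i, (V * M * Vᵀ) i i = v i ⬝ᵥ M *ᵥ v i := by
      intro i
      simp only [mul_apply, transpose_apply, dotProduct, mulVec, Matrix.of_apply, hV,
        Finset.sum_mul, Finset.mul_sum]
      rw [Finset.sum_comm]
      exact Finset.sum_congr rfl fun j _ => Finset.sum_congr rfl fun k _ => by ring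
    calc M.det = (V * M * Vᵀ).det := hdet.symm
      _ ≤ ∏ i, (V * M * Vᵀ) i i := hadamard_psd hd _ hBpsd
      _ = ∏ j, v j ⬝ᵥ M *ᵥ v j := Finset.prod_congr rfl fun i _ => hdiag i
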